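/- Let P₁ and Q₁ be nonempty compact subsets of a finite-dimensional real inner product space, and let χ, χ_σ be linear functionals such that ⟨χ_σ, l₁⟩ = 0 for all l₁ ∈ P₁, ⟨χ_σ, l₂⟩ < 0 for all l₂ ∈ Q₁, and every element of P₁ is nonzero. Define N(t, l₁, l₂) = -⟨χ_σ, (1-t)l₁ + t l₂⟩ / ‖(1-t)l₁ + t l₂‖. Then the partial derivative ∂N/∂t at t = 0 equals -⟨χ_σ, l₂⟩/‖l₁‖ > 0, and there exists ε > 0 such that ∂N/∂t (t, l₁, l₂) > 0 for all t ∈ [0, ε], l₁ ∈ P₁, l₂ ∈ Q₁. -/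

import Mathlib

open Set

open RealInnerProductSpace in
private lemma key_deriv {E : Type*} [NormedAddCommGroup E] [InnerProductSpace ℝ E]
    (l₁ l₂ : E) (c t : ℝ) (hv : (1 - t) • l₁ + t • l₂ ≠ 0) :
    HasDerivAt (fun s : ℝ => -(s * c) / ‖(1 - s) • l₁ + s • l₂‖)
      (-c * (‖l₁‖ ^ 2 + t * ⟪l₁, l₂ - l₁⟫) / ‖(1 - t) • l₁ + t • l₂‖ ^ 3) t := by
  set v : ℝ → E := fun s => (1 - s) • l₁ + s • l₂ with hvdef
  have hvd : HasDerivAt v (l₂ - l₁) t := by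
    have h1 : HasDerivAt (fun s : ℝ => (1 - s) • l₁) ((-1 : ℝ) • l₁) t := by
      have : HasDerivAt (fun s : ℝ => 1 - s) (-1) t := by
        simpa using (hasDerivAt_id t).const_sub 1
      exact this.smul_const l₁
    have h2 : HasDerivAt (fun s : ℝ => s • l₂) ((1 : ℝ) • l₂) t :=
      (hasDerivAt_id t).smul_const l₂
    have h12 := h1.add h2
    rw [show (-1 : ℝ) • l₁ + (1 : ℝ) • l₂ = l₂ - l₁ by module] at h12
    exact h12
  have hvt : v t ≠ 0 := hv
  have hnorm : ‖v t‖ ≠ 0 := norm_ne_zero_iff.mpr hvt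
  have hip : ⟪v t, v t⟫ ≠ 0 := by
    rw [real_inner_self_eq_norm_sq]
    positivity
  have hinner : HasDerivAt (fun s => ⟪v s, v s⟫)
      (⟪v t, l₂ - l₁⟫ + ⟪l₂ - l₁, v t⟫) t := hvd.inner ℝ hvd
  have hsqrt : HasDerivAt (fun s => Real.sqrt ⟪v s, v s⟫)
      ((⟪v t, l₂ - l₁⟫ + ⟪l₂ - l₁, v t⟫) / (2 * Real.sqrt ⟪v t, v t⟫)) t :=
    hinner.sqrt hip
  have hnormeq : ∀ s, ‖v s‖ = Real.sqrt ⟪v s, v s⟫ := fun s => by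
    rw [real_inner_self_eq_norm_sq, Real.sqrt_sq (norm_nonneg _)]
  have hden : HasDerivAt (fun s => ‖v s‖) (⟪v t, l₂ - l₁⟫ / ‖v t‖) t := by
    have : HasDerivAt (fun s => ‖v s‖)
        ((⟪v t, l₂ - l₁⟫ + ⟪l₂ - l₁, v t⟫) / (2 * Real.sqrt ⟪v t, v t⟫)) t := by
      simpa only [← hnormeq] using hsqrt
    convert this using 1
    rw [← hnormeq, real_inner_comm (l₂ - l₁) (v t)]
    ring
  have hnum : HasDerivAt (fun s : ℝ => -(s * c)) (-c) t := by
    have h := ((hasDerivAt_id t).mul_const c).neg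
    simp only [one_mul] at h
    exact h
  have hdiv := hnum.div hden hnorm
  refine hdiv.congr_deriv (Eq.symm ?_)
  have hvl : ⟪v t, l₁⟫ = ‖l₁‖ ^ 2 + t * ⟪l₁, l₂ - l₁⟫ := by
    have : v t = l₁ + t • (l₂ - l₁) := by simp [hvdef]; module
    rw [this, inner_add_left, real_inner_smul_left, real_inner_self_eq_norm_sq,
      real_inner_comm]
  have hvv : ⟪v t, v t⟫ = ‖v t‖ ^ 2 := real_inner_self_eq_norm_sq _
  have hid : ‖v t‖ ^ 2 - t * ⟪v t, l₂ - l₁⟫ = ‖l₁‖ ^ 2 + t * ⟪l₁, l₂ - l₁⟫ := by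
    rw [← hvv, ← hvl]
    have : v t - t • (l₂ - l₁) = l₁ := by simp [hvdef]; module
    rw [← real_inner_smul_right, ← inner_sub_right, this]
  rw [← hid]
  field_simp
  ring

open RealInnerProductSpace in
theorem stmt_2 {E : Type*} [NormedAddCommGroup E] [InnerProductSpace ℝ E]
    [FiniteDimensional ℝ E]
    (P Q : Set E) (hPc : IsCompact P) (hQc : IsCompact Q)
    (hPne : P.Nonempty) (hQne : Q.Nonempty)
    (χσ : E →ₗ[ℝ] ℝ)
    (hP0 : ∀ l₁ ∈ P, χσ l₁ = 0)
    (hQneg : ∀ l₂ ∈ Q, χσ l₂ < 0)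
    (hPnz : ∀ l₁ ∈ P, l₁ ≠ 0)
    (N : ℝ → E → E → ℝ)
    (hN : ∀ t l₁ l₂, N t l₁ l₂ = -χσ ((1 - t) • l₁ + t • l₂) / ‖(1 - t) • l₁ + t • l₂‖) :
    (∀ l₁ ∈ P, ∀ l₂ ∈ Q,
        deriv (fun t => N t l₁ l₂) 0 = -χσ l₂ / ‖l₁‖ ∧ 0 < deriv (fun t => N t l₁ l₂) 0) ∧
    ∃ ε > (0 : ℝ), ∀ t ∈ Icc (0 : ℝ) ε, ∀ l₁ ∈ P, ∀ l₂ ∈ Q,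
      0 < deriv (fun s => N s l₁ l₂) t := by
  -- N as an explicit function
  have hNfun : ∀ l₁ ∈ P, ∀ l₂,
      (fun t => N t l₁ l₂) = fun s : ℝ => -(s * χσ l₂) / ‖(1 - s) • l₁ + s • l₂‖ := by
    intro l₁ hl₁ l₂
    funext s
    rw [hN]
    congr 1
    rw [map_add, map_smul, map_smul, hP0 l₁ hl₁]
    simp [smul_eq_mul]
  constructor
  · intro l₁ hl₁ l₂ hl₂
    have hl₁0 : l₁ ≠ 0 := hPnz l₁ hl₁
    have hn : (0:ℝ) < ‖l₁‖ := norm_pos_iff.mpr hl₁0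
    have hv0 : (1 - (0:ℝ)) • l₁ + (0:ℝ) • l₂ ≠ 0 := by simpa using hl₁0
    have hd := key_deriv l₁ l₂ (χσ l₂) 0 hv0
    have heq : deriv (fun t => N t l₁ l₂) 0
        = -χσ l₂ * (‖l₁‖ ^ 2 + 0 * ⟪l₁, l₂ - l₁⟫) / ‖(1 - (0:ℝ)) • l₁ + (0:ℝ) • l₂‖ ^ 3 := by
      rw [hNfun l₁ hl₁ l₂]
      exact hd.deriv
    have hval : deriv (fun t => N t l₁ l₂) 0 = -χσ l₂ / ‖l₁‖ := by
      rw [heq]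
      simp only [one_smul, zero_smul, add_zero, sub_zero, zero_mul]
      field_simp
    refine ⟨hval, ?_⟩
    rw [hval]
    have := hQneg l₂ hl₂
    apply div_pos (by linarith) hn
  · -- uniform bounds
    obtain ⟨a, haP, ha⟩ := hPc.exists_isMinOn hPne (continuous_norm.continuousOn)
    set m := ‖a‖ with hm
    have hm0 : 0 < m := norm_pos_iff.mpr (hPnz a haP)
    obtain ⟨R, hR⟩ := isBounded_iff_forall_norm_le.mp ((hPc.union hQc).isBounded)
    have hRm : m ≤ R := hR a (Or.inl haP)
    have hR0 : 0 < R := lt_of_lt_of_le hm0 hRm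
    refine ⟨m ^ 2 / (2 * (2 * R ^ 2)), by positivity, ?_⟩
    intro t ht l₁ hl₁ l₂ hl₂
    have hml : m ≤ ‖l₁‖ := ha hl₁
    have hl1R : ‖l₁‖ ≤ R := hR l₁ (Or.inl hl₁)
    have hl2R : ‖l₂‖ ≤ R := hR l₂ (Or.inr hl₂)
    -- the key positivity: g = ‖l₁‖² + t⟪l₁, l₂-l₁⟫ > 0
    have hip : |⟪l₁, l₂ - l₁⟫| ≤ 2 * R ^ 2 := by
      calc |⟪l₁, l₂ - l₁⟫| ≤ ‖l₁‖ * ‖l₂ - l₁‖ := abs_real_inner_le_norm _ _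
        _ ≤ R * (R + R) := by
            apply mul_le_mul hl1R ((norm_sub_le _ _).trans (add_le_add hl2R hl1R))
              (norm_nonneg _) hR0.le
        _ = 2 * R ^ 2 := by ring
    have hg : 0 < ‖l₁‖ ^ 2 + t * ⟪l₁, l₂ - l₁⟫ := by
      have h1 : t * ⟪l₁, l₂ - l₁⟫ ≥ -(m ^ 2 / 2) := by
        have habs : |t * ⟪l₁, l₂ - l₁⟫| ≤ m ^ 2 / 2 := by
          rw [abs_mul]
          calc |t| * |⟪l₁, l₂ - l₁⟫| ≤ (m ^ 2 / (2 * (2 * R ^ 2))) * (2 * R ^ 2) := by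
                apply mul_le_mul _ hip (abs_nonneg _) (by positivity)
                rw [abs_of_nonneg ht.1]; exact ht.2
            _ = m ^ 2 / 2 := by field_simp
        linarith [neg_abs_le (t * ⟪l₁, l₂ - l₁⟫)]
      have h2 : m ^ 2 ≤ ‖l₁‖ ^ 2 := by
        apply pow_le_pow_left₀ hm0.le hml
      nlinarith
    -- v t ≠ 0
    have hvl : ⟪(1 - t) • l₁ + t • l₂, l₁⟫ = ‖l₁‖ ^ 2 + t * ⟪l₁, l₂ - l₁⟫ := by
      have hveq : (1 - t) • l₁ + t • l₂ = l₁ + t • (l₂ - l₁) := by module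
      rw [hveq, inner_add_left, real_inner_smul_left, real_inner_self_eq_norm_sq,
        real_inner_comm]
    have hv : (1 - t) • l₁ + t • l₂ ≠ 0 := by
      intro h
      rw [h, inner_zero_left] at hvl
      exact absurd hvl.symm (ne_of_gt hg)
    have hd := key_deriv l₁ l₂ (χσ l₂) t hv
    rw [hNfun l₁ hl₁ l₂, hd.deriv]
    have hc := hQneg l₂ hl₂
    have hvn : (0:ℝ) < ‖(1 - t) • l₁ + t • l₂‖ := norm_pos_iff.mpr hv
    exact div_pos (mul_pos (by linarith) hg) (by positivity)
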